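/- Marginal coverage of split conformal prediction (upper bound): let W_1, …, W_{N+1} be exchangeable random elements of a measurable space 𝒲, let s : 𝒲 → ℝ be a measurable nonconformity score function, set s_i := s(W_i), and assume the scores s_1, …, s_{N+1} are almost surely pairwise distinct. Then for every α ∈ [0,1], P( s(W_{N+1}) ≤ Q_{1−α}(s_1, …, s_N, +∞) ) ≤ 1 − α + 1/(N+1). -/

import Mathlib

open MeasureTheory
open scoped ENNReal

/-- Exchangeability: for every permutation `π`, the joint law of the permuted family
equals the joint law of the original family. -/
def Exchangeable {Ω : Type*} [MeasurableSpace Ω] (P : Measure Ω)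
    {m : ℕ} {α : Type*} [MeasurableSpace α] (Z : Fin m → Ω → α) : Prop :=
  ∀ π : Equiv.Perm (Fin m),
    Measure.map (fun ω => fun i => Z (π i) ω) P = Measure.map (fun ω => fun i => Z i ω) P

/-- Empirical `β`-quantile of extended-real values `z 1, …, z m`:
`inf { x ∈ ℝ : (1/m) · #{ i : z i ≤ x } ≥ β }`, with `inf ∅ = +∞` (in `EReal`). -/
noncomputable def empQuantile {m : ℕ} (z : Fin m → EReal) (β : ℝ) : EReal :=
  sInf ((fun r : ℝ => (r : EReal)) ''
    {r : ℝ | β ≤ ((Finset.univ.filter (fun i => z i ≤ (r : EReal))).card : ℝ) / m})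

/-- The empirical `β`-quantile of the `n + 1` values `z 1, …, z n, +∞`. -/
noncomputable def augQuantile {n : ℕ} (z : Fin n → ℝ) (β : ℝ) : EReal :=
  empQuantile (Fin.snoc (fun i => ((z i : ℝ) : EReal)) ⊤) β


open scoped ENNReal in
noncomputable def rnk {m : ℕ} (v : Fin m → ℝ) (j : Fin m) : ℕ :=
  (Finset.univ.filter (fun i => v i ≤ v j)).card

lemma rnk_perm {m : ℕ} (v : Fin m → ℝ) (σ : Equiv.Perm (Fin m)) (j : Fin m) :
    rnk (fun i => v (σ i)) j = rnk v (σ j) := by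
  unfold rnk
  apply Finset.card_bij' (fun i _ => σ i) (fun i _ => σ.symm i) <;>
    simp [Finset.mem_filter]

lemma rnk_last_eq {n : ℕ} (v : Fin (n+1) → ℝ) :
    rnk v (Fin.last n) =
      (Finset.univ.filter (fun i : Fin n => v i.castSucc ≤ v (Fin.last n))).card + 1 := by
  unfold rnk
  rw [Finset.card_filter, Fin.sum_univ_castSucc, Finset.card_filter]
  simp

lemma aug_count {n : ℕ} (v : Fin (n+1) → ℝ) (r : ℝ) :
    (Finset.univ.filter (fun i : Fin (n+1) =>
        (Fin.snoc (fun i : Fin n => ((v i.castSucc : ℝ) : EReal)) (⊤ : EReal) : Fin (n+1) → EReal) i ≤ (r : EReal))).card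
      = (Finset.univ.filter (fun i : Fin n => v i.castSucc ≤ r)).card := by
  rw [Finset.card_filter, Fin.sum_univ_castSucc, Finset.card_filter]
  have htop : ¬ ((⊤ : EReal) ≤ (r : EReal)) := by
    simp only [top_le_iff]
    exact fun h => absurd h (EReal.coe_lt_top r).ne
  simp [Fin.snoc_castSucc, Fin.snoc_last, htop, EReal.coe_le_coe_iff]

lemma quant_le {n : ℕ} {v : Fin (n+1) → ℝ} {β : ℝ}
    (hd : ∀ i : Fin (n+1), i ≠ Fin.last n → v i ≠ v (Fin.last n))
    (h : (v (Fin.last n) : EReal) ≤ augQuantile (fun i : Fin n => v (Fin.castSucc i)) β) :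
    rnk v (Fin.last n) ≤ ⌈β * (n+1)⌉₊ := by
  by_contra hk
  push_neg at hk
  set k := ⌈β * (n+1)⌉₊ with hkdef
  -- d ≥ k
  have hd' : ∀ i : Fin n, v i.castSucc ≤ v (Fin.last n) ↔ v i.castSucc < v (Fin.last n) := by
    intro i
    constructor
    · intro hle
      exact lt_of_le_of_ne hle (hd i.castSucc (Fin.castSucc_lt_last i).ne)
    · exact le_of_lt
  rw [rnk_last_eq v] at hk
  have hdk : k ≤ (Finset.univ.filter (fun i : Fin n => v i.castSucc ≤ v (Fin.last n))).card :=
    Nat.lt_succ_iff.mp hk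
  set T : Finset ℝ := insert (v (Fin.last n) - 1)
    ((Finset.univ.filter (fun i : Fin n => v i.castSucc ≤ v (Fin.last n))).image
      (fun i => v i.castSucc)) with hT
  have hTne : T.Nonempty := ⟨_, Finset.mem_insert_self _ _⟩
  set r := T.max' hTne with hrdef
  have hrlt : r < v (Fin.last n) := by
    rw [hrdef]
    apply (Finset.max'_lt_iff T hTne).2
    intro b hb
    rw [hT] at hb
    rcases Finset.mem_insert.1 hb with hb | hb
    · rw [hb]; linarith
    · obtain ⟨i, hi, rfl⟩ := Finset.mem_image.1 hb
      exact (hd' i).1 (Finset.mem_filter.1 hi).2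
  have hsub : (Finset.univ.filter (fun i : Fin n => v i.castSucc ≤ v (Fin.last n))) ⊆
      (Finset.univ.filter (fun i : Fin n => v i.castSucc ≤ r)) := by
    intro i hi
    simp only [Finset.mem_filter, Finset.mem_univ, true_and] at hi ⊢
    exact Finset.le_max' _ _ (by
      rw [hT]
      exact Finset.mem_insert_of_mem (Finset.mem_image_of_mem _
        (Finset.mem_filter.2 ⟨Finset.mem_univ _, hi⟩)))
  have hck : k ≤ (Finset.univ.filter (fun i : Fin n => v i.castSucc ≤ r)).card :=
    hdk.trans (Finset.card_le_card hsub)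
  have hmem : β ≤ ((Finset.univ.filter (fun i : Fin (n+1) =>
      (Fin.snoc (fun i : Fin n => ((v i.castSucc : ℝ) : EReal)) (⊤ : EReal) : Fin (n+1) → EReal) i
        ≤ (r : EReal))).card : ℝ) / ((n+1 : ℕ) : ℝ) := by
    rw [aug_count, le_div_iff₀ (by positivity)]
    calc β * ((n+1 : ℕ) : ℝ) = β * (n+1) := by push_cast; ring
    _ ≤ (k : ℝ) := Nat.le_ceil _
    _ ≤ _ := by exact_mod_cast hck
  have hq : augQuantile (fun i : Fin n => v (Fin.castSucc i)) β ≤ (r : EReal) := by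
    unfold augQuantile empQuantile
    exact sInf_le ⟨r, hmem, rfl⟩
  have := h.trans hq
  rw [EReal.coe_le_coe_iff] at this
  linarith

lemma rnk_lt_rnk {m : ℕ} {v : Fin m → ℝ} {a b : Fin m} (h : v a < v b) :
    rnk v a < rnk v b := by
  apply Finset.card_lt_card
  constructor
  · intro i hi
    simp only [Finset.mem_filter, Finset.mem_univ, true_and] at *
    exact hi.trans h.le
  · intro hsub
    have hb : b ∈ Finset.univ.filter (fun i => v i ≤ v b) := by simp
    have := hsub hb
    simp only [Finset.mem_filter, Finset.mem_univ, true_and] at this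
    exact absurd this (not_le.2 h)

lemma rnk_inj {m : ℕ} {v : Fin m → ℝ} (hd : ∀ i j : Fin m, i ≠ j → v i ≠ v j) :
    Function.Injective (rnk v) := by
  intro a b hab
  by_contra hne
  rcases lt_trichotomy (v a) (v b) with h | h | h
  · exact absurd hab (rnk_lt_rnk h).ne
  · exact hd a b hne h
  · exact absurd hab.symm (rnk_lt_rnk h).ne

lemma one_le_rnk {m : ℕ} (v : Fin m → ℝ) (j : Fin m) : 1 ≤ rnk v j := by
  rw [Nat.one_le_iff_ne_zero, ← Nat.pos_iff_ne_zero]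
  apply Finset.card_pos.2
  exact ⟨j, by simp [rnk]⟩

lemma rnk_le_card {m : ℕ} (v : Fin m → ℝ) (j : Fin m) : rnk v j ≤ m := by
  simpa [rnk] using Finset.card_filter_le (Finset.univ : Finset (Fin m)) _

lemma count_rnk_le {m k : ℕ} {v : Fin m → ℝ} (hd : ∀ i j : Fin m, i ≠ j → v i ≠ v j) :
    (Finset.univ.filter (fun j => rnk v j ≤ k)).card ≤ k := by
  have : (Finset.univ.filter (fun j => rnk v j ≤ k)).card ≤ (Finset.Icc 1 k).card := by
    apply Finset.card_le_card_of_injOn (rnk v)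
    · intro j hj
      simp only [Finset.mem_coe, Finset.mem_filter] at hj
      exact Finset.mem_Icc.2 ⟨one_le_rnk v j, hj.2⟩
    · exact fun a _ b _ h => rnk_inj hd h
  simpa [Nat.card_Icc] using this

/-- Marginal coverage of split conformal prediction (upper bound), assuming the
scores `s (W 1), …, s (W (N+1))` are almost surely pairwise distinct. -/
theorem stmt3 {Ω : Type*} [MeasurableSpace Ω] (P : Measure Ω) [IsProbabilityMeasure P]
    {𝒲 : Type*} [MeasurableSpace 𝒲]
    (N : ℕ) (W : Fin (N + 1) → Ω → 𝒲) (hmeas : ∀ i, Measurable (W i))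
    (hexch : Exchangeable P W)
    (s : 𝒲 → ℝ) (hs : Measurable s)
    (hdist : ∀ᵐ ω ∂P, ∀ i j : Fin (N + 1), i ≠ j → s (W i ω) ≠ s (W j ω))
    (α : ℝ) (hα0 : 0 ≤ α) (hα1 : α ≤ 1) :
    P {ω | (s (W (Fin.last N) ω) : EReal) ≤
        augQuantile (fun i : Fin N => s (W (Fin.castSucc i) ω)) (1 - α)} ≤
      ENNReal.ofReal (1 - α + 1 / (N + 1)) := by
  classical
  set β := 1 - α with hβ
  have hβ0 : 0 ≤ β := by simp only [hβ]; linarith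
  set k := ⌈β * (N+1)⌉₊ with hk
  set S : Ω → Fin (N+1) → ℝ := fun ω i => s (W i ω) with hS
  have hSmeas : Measurable S := measurable_pi_lambda _ (fun i => hs.comp (hmeas i))
  set μ : Measure (Fin (N+1) → ℝ) := Measure.map S P with hμ
  have hμprob : IsProbabilityMeasure μ := Measure.isProbabilityMeasure_map hSmeas.aemeasurable
  -- permutation invariance of μ
  have hinv : ∀ σ : Equiv.Perm (Fin (N+1)), Measure.map (fun v => v ∘ σ) μ = μ := by
    intro σ
    have hcomp : Measurable (fun v : Fin (N+1) → ℝ => v ∘ σ) :=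
      measurable_pi_lambda _ (fun i => measurable_pi_apply _)
    have hsmap : Measurable (fun u : Fin (N+1) → 𝒲 => fun i => s (u i)) :=
      measurable_pi_lambda _ (fun i => hs.comp (measurable_pi_apply i))
    have hWmeas : Measurable (fun ω => fun i => W i ω) := measurable_pi_lambda _ hmeas
    have hWσmeas : Measurable (fun ω => fun i => W (σ i) ω) :=
      measurable_pi_lambda _ (fun i => hmeas _)
    have hpush := congrArg (Measure.map (fun u : Fin (N+1) → 𝒲 => fun i => s (u i))) (hexch σ)
    rw [Measure.map_map hsmap hWσmeas, Measure.map_map hsmap hWmeas] at hpush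
    rw [hμ, Measure.map_map hcomp hSmeas]
    exact hpush
  -- the rank sets
  set A : Fin (N+1) → Set (Fin (N+1) → ℝ) := fun j => {v | rnk v j ≤ k} with hA
  have hrnkmeas : ∀ j : Fin (N+1), Measurable (fun v : Fin (N+1) → ℝ => rnk v j) := by
    intro j
    unfold rnk
    simp only [Finset.card_filter]
    exact Finset.measurable_sum _ (fun i _ => Measurable.ite
      (measurableSet_le (measurable_pi_apply i) (measurable_pi_apply j))
      measurable_const measurable_const)
  have hAmeas : ∀ j, MeasurableSet (A j) := by
    intro j
    exact (hrnkmeas j) (by trivial : MeasurableSet {n : ℕ | n ≤ k})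
  -- all rank sets have the same measure
  have hsame : ∀ j : Fin (N+1), μ (A j) = μ (A (Fin.last N)) := by
    intro j
    set σ := Equiv.swap j (Fin.last N) with hσ
    have hcomp : Measurable (fun v : Fin (N+1) → ℝ => v ∘ σ) :=
      measurable_pi_lambda _ (fun i => measurable_pi_apply _)
    have hpre : (fun v : Fin (N+1) → ℝ => v ∘ σ) ⁻¹' (A (Fin.last N)) = A j := by
      ext v
      simp only [hA, Set.mem_preimage, Set.mem_setOf_eq]
      have : rnk (v ∘ σ) (Fin.last N) = rnk v (σ (Fin.last N)) := rnk_perm v σ (Fin.last N)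
      rw [this, hσ, Equiv.swap_apply_right]
    calc μ (A j) = μ ((fun v : Fin (N+1) → ℝ => v ∘ σ) ⁻¹' (A (Fin.last N))) := by rw [hpre]
    _ = (Measure.map (fun v : Fin (N+1) → ℝ => v ∘ σ) μ) (A (Fin.last N)) :=
        (Measure.map_apply hcomp (hAmeas (Fin.last N))).symm
    _ = μ (A (Fin.last N)) := by rw [hinv σ]
  -- a.e. distinctness under μ
  have hDmeas : MeasurableSet {v : Fin (N+1) → ℝ | ∀ i j : Fin (N+1), i ≠ j → v i ≠ v j} := by
    have : {v : Fin (N+1) → ℝ | ∀ i j : Fin (N+1), i ≠ j → v i ≠ v j} =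
        ⋂ (i : Fin (N+1)) (j : Fin (N+1)), {v | i ≠ j → v i ≠ v j} := by
      ext v; simp [Set.mem_iInter]
    rw [this]
    refine MeasurableSet.iInter (fun i => MeasurableSet.iInter (fun j => ?_))
    by_cases hij : i = j
    · simp [hij]
    · have : {v : Fin (N+1) → ℝ | i ≠ j → v i ≠ v j} = {v | v i = v j}ᶜ := by
        ext v; simp [hij]
      rw [this]
      exact (measurableSet_eq_fun (measurable_pi_apply i) (measurable_pi_apply j)).compl
  have haedist : ∀ᵐ v ∂μ, ∀ i j : Fin (N+1), i ≠ j → v i ≠ v j := by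
    rw [hμ, MeasureTheory.ae_map_iff hSmeas.aemeasurable hDmeas]
    filter_upwards [hdist] with ω h
    exact h
  -- key counting bound
  have key : ((N:ℝ≥0∞)+1) * μ (A (Fin.last N)) ≤ (k : ℝ≥0∞) := by
    have step1 : ∑ j : Fin (N+1), μ (A j) = ((N:ℝ≥0∞)+1) * μ (A (Fin.last N)) := by
      rw [Finset.sum_congr rfl (fun j _ => hsame j), Finset.sum_const, Finset.card_univ]
      simp [nsmul_eq_mul]
    rw [← step1]
    have step2 : ∫⁻ v, ∑ j : Fin (N+1), (A j).indicator (fun _ => (1:ℝ≥0∞)) v ∂μ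
        = ∑ j : Fin (N+1), ∫⁻ v, (A j).indicator (fun _ => (1:ℝ≥0∞)) v ∂μ :=
      MeasureTheory.lintegral_finset_sum _
        (fun j _ => (measurable_one.indicator (hAmeas j)))
    have step3 : ∑ j : Fin (N+1), μ (A j)
        = ∫⁻ v, ∑ j : Fin (N+1), (A j).indicator (fun _ => (1:ℝ≥0∞)) v ∂μ := by
      rw [step2]
      refine Finset.sum_congr rfl (fun j _ => ?_)
      exact (MeasureTheory.lintegral_indicator_one (hAmeas j)).symm
    rw [step3]
    calc ∫⁻ v, ∑ j : Fin (N+1), (A j).indicator (fun _ => (1:ℝ≥0∞)) v ∂μ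
        ≤ ∫⁻ _, (k : ℝ≥0∞) ∂μ := by
          apply MeasureTheory.lintegral_mono_ae
          filter_upwards [haedist] with v hv
          have hcount := count_rnk_le (k := k) hv
          calc ∑ j : Fin (N+1), (A j).indicator (fun _ => (1:ℝ≥0∞)) v
              = ((Finset.univ.filter (fun j : Fin (N+1) => rnk v j ≤ k)).card : ℝ≥0∞) := by
                rw [Finset.card_filter]
                push_cast
                refine Finset.sum_congr rfl (fun j _ => ?_)
                by_cases hj : rnk v j ≤ k
                · simp [hA, Set.indicator_apply, hj]
                · simp [hA, Set.indicator_apply, hj]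
          _ ≤ (k : ℝ≥0∞) := by exact_mod_cast hcount
    _ = (k : ℝ≥0∞) := by simp
  -- event inclusion
  have hEsub : {ω | (s (W (Fin.last N) ω) : EReal) ≤
        augQuantile (fun i : Fin N => s (W (Fin.castSucc i) ω)) β} ⊆
      S ⁻¹' (A (Fin.last N)) ∪ {ω | ¬ ∀ i j : Fin (N+1), i ≠ j → s (W i ω) ≠ s (W j ω)} := by
    intro ω hω
    by_cases hgood : ∀ i j : Fin (N+1), i ≠ j → s (W i ω) ≠ s (W j ω)
    · left
      simp only [Set.mem_preimage, hA, Set.mem_setOf_eq, hk]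
      push_cast
      exact quant_le (fun i hi => hgood i (Fin.last N) hi) hω
    · right
      exact hgood
  -- put it together
  have hbad : P {ω | ¬ ∀ i j : Fin (N+1), i ≠ j → s (W i ω) ≠ s (W j ω)} = 0 := by
    rw [← MeasureTheory.ae_iff]
    exact hdist
  have hbound : P {ω | (s (W (Fin.last N) ω) : EReal) ≤
      augQuantile (fun i : Fin N => s (W (Fin.castSucc i) ω)) β} ≤ μ (A (Fin.last N)) := by
    calc P {ω | (s (W (Fin.last N) ω) : EReal) ≤
        augQuantile (fun i : Fin N => s (W (Fin.castSucc i) ω)) β}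
        ≤ P (S ⁻¹' (A (Fin.last N)) ∪
            {ω | ¬ ∀ i j : Fin (N+1), i ≠ j → s (W i ω) ≠ s (W j ω)}) :=
          measure_mono hEsub
    _ ≤ P (S ⁻¹' (A (Fin.last N))) +
          P {ω | ¬ ∀ i j : Fin (N+1), i ≠ j → s (W i ω) ≠ s (W j ω)} := measure_union_le _ _
    _ = μ (A (Fin.last N)) := by
          rw [hbad, add_zero, hμ, Measure.map_apply hSmeas (hAmeas (Fin.last N))]
  refine hbound.trans ?_
  -- final arithmetic
  have hNpos : (0:ℝ) < (N:ℝ) + 1 := by positivity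
  have hkreal : (k : ℝ) ≤ ((N:ℝ)+1) * (β + 1/((N:ℝ)+1)) := by
    have h1 : (k : ℝ) < β * ((N:ℝ)+1) + 1 := by
      rw [hk]
      exact Nat.ceil_lt_add_one (by positivity)
    have h2 : ((N:ℝ)+1) * (β + 1/((N:ℝ)+1)) = β * ((N:ℝ)+1) + 1 := by
      field_simp
    rw [h2]
    linarith
  have hfin : (k : ℝ≥0∞) ≤ ((N:ℝ≥0∞)+1) * ENNReal.ofReal (β + 1/((N:ℝ)+1)) := by
    have hcast : ((N:ℝ≥0∞)+1) = ENNReal.ofReal ((N:ℝ)+1) := by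
      rw [ENNReal.ofReal_add (by positivity) zero_le_one]
      simp [ENNReal.ofReal_natCast]
    rw [hcast, ← ENNReal.ofReal_mul (le_of_lt hNpos)]
    calc (k : ℝ≥0∞) = ENNReal.ofReal (k : ℝ) := by simp [ENNReal.ofReal_natCast]
    _ ≤ _ := ENNReal.ofReal_le_ofReal hkreal
  have hNne : ((N:ℝ≥0∞)+1) ≠ 0 :=
    (lt_of_lt_of_le zero_lt_one le_add_self).ne'
  have hNnetop : ((N:ℝ≥0∞)+1) ≠ ⊤ := by
    simp [ENNReal.add_ne_top]
  rw [← ENNReal.mul_le_mul_iff_right hNne hNnetop]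
  calc ((N:ℝ≥0∞)+1) * μ (A (Fin.last N)) ≤ (k : ℝ≥0∞) := key
  _ ≤ ((N:ℝ≥0∞)+1) * ENNReal.ofReal (β + 1/((N:ℝ)+1)) := hfin
  _ = ((N:ℝ≥0∞)+1) * ENNReal.ofReal (1 - α + 1/((N:ℝ)+1)) := by rw [hβ]
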